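/- For every n, the set of permutations of length n avoiding both the vincular pattern \underline{12}3 and the classical pattern 132 equals the set of permutations of length n avoiding both classical patterns 123 and 132; that is, Av_n(\underline{12}3, 132) = Av_n(123, 132). -/
import Mathlib


/-- `τ` contains the vincular pattern with entries `σ` and adjacency-constraint set `A`:
there is an occurrence of the classical pattern `σ` in `τ` (a strictly increasing choice of
positions carrying entries order-isomorphic to `σ`) such that for every `a ∈ A`, the
occurrence positions corresponding to entries `a` and `a + 1` of `σ` are adjacent in `τ`.
Classical patterns correspond to `A = ∅`. -/
def ContainsV (σ : List ℕ) (A : Set ℕ) (τ : List ℕ) : Prop :=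
  ∃ f : Fin σ.length → Fin τ.length,
    StrictMono f ∧
    (∀ a b : Fin σ.length, σ.get a < σ.get b ↔ τ.get (f a) < τ.get (f b)) ∧
    ∀ a : ℕ, a ∈ A → ∀ h : a + 1 < σ.length,
      (f ⟨a + 1, h⟩ : ℕ) = (f ⟨a, Nat.lt_of_succ_lt h⟩ : ℕ) + 1

open Classical in
/-- The `σ`-avoiding stack pass: `scAux σ A stack input` where the stack is recorded
top-to-bottom; the next input element is pushed when the stack contents together with the
new element on top avoid the vincular pattern `(σ, A)`, and otherwise the top of the stack
is popped to the output; at the end the remaining stack entries are popped to the output. -/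
noncomputable def scAux (σ : List ℕ) (A : Set ℕ) : List ℕ → List ℕ → List ℕ
  | stack, [] => stack
  | [], x :: rest => scAux σ A [x] rest
  | y :: stack', x :: rest =>
    if ContainsV σ A (x :: y :: stack') then
      y :: scAux σ A stack' (x :: rest)
    else
      scAux σ A (x :: y :: stack') rest
termination_by stack input => stack.length + 2 * input.length
decreasing_by all_goals (simp only [List.length_cons, List.length_nil]; omega)

/-- The `(σ, A)`-avoiding stack-sorting map `sc_{(σ, A)}`. -/
noncomputable def sc (σ : List ℕ) (A : Set ℕ) (τ : List ℕ) : List ℕ :=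
  scAux σ A [] τ

/-- `τ` is (the one-line notation of) a permutation of `{1, …, n}`. -/
def IsPermList (n : ℕ) (τ : List ℕ) : Prop :=
  τ.Perm (List.range' 1 n)

/-- The sorting class `Sort_n(sc_{(σ, A)})`: permutations of length `n` whose image under
`sc_{(σ, A)}` avoids the classical pattern `231`. -/
def SortSet (σ : List ℕ) (A : Set ℕ) (n : ℕ) : Set (List ℕ) :=
  {τ | IsPermList n τ ∧ ¬ ContainsV [2, 3, 1] ∅ (sc σ A τ)}

lemma containsV_weaken {σ : List ℕ} {A : Set ℕ} {τ : List ℕ}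
    (h : ContainsV σ A τ) : ContainsV σ ∅ τ :=
  h.imp fun f ⟨h1, h2, _⟩ => ⟨h1, h2, fun a ha => ha.elim⟩

lemma build3 {τ : List ℕ} (u v w : ℕ)
    (i j k : Fin τ.length) (hij : i < j) (hjk : j < k)
    (h1 : u < v ↔ τ.get i < τ.get j)
    (h2 : u < w ↔ τ.get i < τ.get k)
    (h3 : v < w ↔ τ.get j < τ.get k)
    (h1' : v < u ↔ τ.get j < τ.get i)
    (h2' : w < u ↔ τ.get k < τ.get i)
    (h3' : w < v ↔ τ.get k < τ.get j)
    (A : Set ℕ) (hA : ∀ a ∈ A, a = 0) (hadj : 0 ∈ A → (j : ℕ) = (i : ℕ) + 1) :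
    ContainsV [u, v, w] A τ := by
  refine ⟨fun a => if (a : ℕ) = 0 then i else if (a : ℕ) = 1 then j else k, ?_, ?_, ?_⟩
  · intro a b hab
    fin_cases a <;> fin_cases b <;> simp_all <;> omega
  · intro a b
    fin_cases a <;> fin_cases b <;> simp_all
  · intro a ha h
    have := hA a ha; subst this
    simpa using hadj ha

lemma main_step {τ : List ℕ} (hn : τ.Nodup) (h132 : ¬ ContainsV [1, 3, 2] ∅ τ) :
    ∀ d : ℕ, ∀ i j k : Fin τ.length, (j : ℕ) - (i : ℕ) ≤ d → i < j → j < k →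
      τ.get i < τ.get j → τ.get j < τ.get k → ContainsV [1, 2, 3] {0} τ := by
  intro d
  induction d with
  | zero => intro i j k hd hij _ _ _; exact absurd hd (by omega)
  | succ d ih =>
    intro i j k hd hij hjk hv1 hv2
    by_cases hadj : (j : ℕ) = (i : ℕ) + 1
    · exact build3 1 2 3 i j k hij hjk (by omega) (by omega) (by omega)
        (by omega) (by omega) (by omega) {0} (fun a ha => ha) (fun _ => hadj)
    · have hm : (i : ℕ) + 1 < τ.length := lt_trans (by omega : (i:ℕ)+1 < (j:ℕ)) j.isLt
      set m : Fin τ.length := ⟨(i : ℕ) + 1, hm⟩ with hmdef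
      have hmj : m < j := by simp [Fin.lt_def, hmdef]; omega
      have him : i < m := by simp [Fin.lt_def, hmdef]
      have hne : τ.get m ≠ τ.get i := fun h => by
        have := (List.Nodup.get_inj_iff hn).mp h
        simp [hmdef, Fin.ext_iff] at this
      rcases Nat.lt_trichotomy (τ.get m) (τ.get i) with h | h | h
      · exact ih m j k (by simp [hmdef]; omega) hmj hjk (lt_trans h hv1) hv2
      · exact absurd h hne
      · have hmk : m < k := lt_trans hmj hjk
        rcases Nat.lt_trichotomy (τ.get m) (τ.get k) with h' | h' | h'
        · exact build3 1 2 3 i m k him hmk (by omega) (by omega) (by omega)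
            (by omega) (by omega) (by omega) {0} (fun a ha => ha) (fun _ => rfl)
        · exact absurd ((List.Nodup.get_inj_iff hn).mp h')
            (fun he => absurd he (by simp [Fin.ext_iff, hmdef]; omega))
        · have hik : τ.get i < τ.get k := lt_trans hv1 hv2
          exact absurd (build3 1 3 2 i m k him hmk (by omega) (by omega) (by omega)
            (by omega) (by omega) (by omega) ∅ (fun a ha => ha.elim)
            (fun h => h.elim)) h132

lemma main_lemma {τ : List ℕ} (hn : τ.Nodup) (h132 : ¬ ContainsV [1, 3, 2] ∅ τ)
    (h123 : ContainsV [1, 2, 3] ∅ τ) : ContainsV [1, 2, 3] {0} τ := by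
  obtain ⟨f, hmono, hiso, -⟩ := h123
  have h01 : (⟨0, by norm_num⟩ : Fin ([1,2,3].length)) < ⟨1, by norm_num⟩ := by
    simp [Fin.lt_def]
  have h12 : (⟨1, by norm_num⟩ : Fin ([1,2,3].length)) < ⟨2, by norm_num⟩ := by
    simp [Fin.lt_def]
  exact main_step hn h132 ((f ⟨1, by norm_num⟩ : ℕ) - (f ⟨0, by norm_num⟩ : ℕ))
    (f ⟨0, by norm_num⟩) (f ⟨1, by norm_num⟩) (f ⟨2, by norm_num⟩) le_rfl
    (hmono h01) (hmono h12)
    ((hiso _ _).mp (by norm_num)) ((hiso _ _).mp (by norm_num))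

/-- Av_n(\un{12}3, 132) = Av_n(123, 132). -/
theorem av_un123_eq_av_123 (n : ℕ) :
    {τ | IsPermList n τ ∧ ¬ ContainsV [1, 2, 3] {0} τ ∧ ¬ ContainsV [1, 3, 2] ∅ τ} =
      {τ | IsPermList n τ ∧ ¬ ContainsV [1, 2, 3] ∅ τ ∧
        ¬ ContainsV [1, 3, 2] ∅ τ} := by
  ext τ
  simp only [Set.mem_setOf_eq]
  constructor
  · rintro ⟨hp, hv, h132⟩
    have hn : τ.Nodup := hp.nodup_iff.mpr (List.nodup_range' (s := 1) (n := n))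
    exact ⟨hp, fun h123 => hv (main_lemma hn h132 h123), h132⟩
  · rintro ⟨hp, h123, h132⟩
    exact ⟨hp, fun hv => h123 (containsV_weaken hv), h132⟩
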